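/- arXiv:1711.04186 — 5 statements merged into one kernel-verified Lean document; each statement's English description precedes it below -/
import Mathlib

section
/- For every additive character s : A → ℂ and every c ∈ C, the generalized projectors commute pairwise: 𝒜_s ∘ ℬ_c = ℬ_c ∘ 𝒜_s. -/
open scoped BigOperators

noncomputable section

variable {A B C : Type} [AddCommGroup A] [Fintype A] [AddCommGroup B] [Fintype B]
  [DecidableEq B] [AddCommGroup C] [Fintype C]

/-- The shift operator `P_t` on the Hilbert space `𝓗 = B → ℂ`: `(P_t ψ)(g) = ψ(g - t)`. -/
def shiftOp (t : B) : (B → ℂ) →ₗ[ℂ] (B → ℂ) where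
  toFun ψ := fun g => ψ (g - t)
  map_add' _ _ := rfl
  map_smul' _ _ := rfl

/-- The clock operator `Q_m` on `𝓗 = B → ℂ`: `(Q_m ψ)(g) = m(g) ψ(g)`. -/
def clockOp (m : B → ℂ) : (B → ℂ) →ₗ[ℂ] (B → ℂ) where
  toFun ψ := fun g => m g * ψ g
  map_add' ψ φ := by funext g; simp [mul_add]
  map_smul' c ψ := by funext g; simp [smul_eq_mul]; ring

/-- The basis vector `δ_f ∈ 𝓗`. -/
def deltaVec (f : B) : B → ℂ := fun g => if g = f then 1 else 0

/-- The generalized gauge projector `𝒜_s = (1/|A|) Σ_{a ∈ A} s(a) • P_{u(a)}`. -/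
def gaugeOp (u : A →+ B) (s : AddChar A ℂ) : (B → ℂ) →ₗ[ℂ] (B → ℂ) :=
  (Fintype.card A : ℂ)⁻¹ • ∑ a : A, s a • shiftOp (u a)

/-- The holonomy projector `ℬ_c = (1/|C|) Σ_r r(c) • Q_{r ∘ v}`, the sum running over all
additive characters `r : C → ℂ`. -/
def holOp (v : B →+ C) (c : C) : (B → ℂ) →ₗ[ℂ] (B → ℂ) :=
  (Fintype.card C : ℂ)⁻¹ • ∑ r : AddChar C ℂ, r c • clockOp (fun g => r (v g))

/-- The ground state projector `Π₀ = 𝒜₀ ∘ ℬ₀`. -/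
def groundProj (u : A →+ B) (v : B →+ C) : (B → ℂ) →ₗ[ℂ] (B → ℂ) :=
  gaugeOp u 1 ∘ₗ holOp v 0

/-- the generalized projectors `𝒜_s` and `ℬ_c` commute pairwise. -/
theorem gaugeOp_commutes_holOp (u : A →+ B) (v : B →+ C) (hvu : v.comp u = 0)
    (s : AddChar A ℂ) (c : C) :
    gaugeOp u s ∘ₗ holOp v c = holOp v c ∘ₗ gaugeOp u s := by
  ext ψ g
  have key : ∀ a : A, v (u a) = 0 := fun a => DFunLike.congr_fun hvu a
  simp only [gaugeOp, holOp, LinearMap.comp_apply, LinearMap.smul_apply,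
    LinearMap.coe_sum, Finset.sum_apply, Pi.smul_apply, smul_eq_mul,
    shiftOp, clockOp, LinearMap.coe_mk, AddHom.coe_mk,
    Finset.mul_sum, Finset.sum_mul]
  rw [Finset.sum_comm]
  refine Finset.sum_congr rfl fun r _ => Finset.sum_congr rfl fun a _ => ?_
  have : v (g - u a) = v g := by rw [map_sub, key, sub_zero]
  rw [this]
  ring
end
end

section
/- For every f ∈ B: Π₀ δ_f = 𝒜₀ δ_f if v(f) = 0, and Π₀ δ_f = 0 otherwise; moreover, for every f ∈ B with v(f) = 0 the vector 𝒜₀ δ_f is a ground state, i.e. Π₀ (𝒜₀ δ_f) = 𝒜₀ δ_f. -/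
open scoped BigOperators

noncomputable section

variable {A B C : Type} [AddCommGroup A] [Fintype A] [AddCommGroup B] [Fintype B]
  [DecidableEq B] [AddCommGroup C] [Fintype C]

lemma holOp_delta_apply (v : B →+ C) (b g : B) :
    holOp v 0 (deltaVec b) g = (Fintype.card C : ℂ)⁻¹ * ((∑ r : AddChar C ℂ, r (v g)) * deltaVec b g) := by
  classical
  simp only [holOp, LinearMap.smul_apply, LinearMap.sum_apply, LinearMap.coe_sum,
    Finset.sum_apply, clockOp, LinearMap.coe_mk, AddHom.coe_mk, LinearMap.smul_apply,
    Pi.smul_apply, smul_eq_mul, AddChar.map_zero_eq_one, one_mul, Finset.sum_mul]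

lemma holOp_delta_zero (v : B →+ C) (b : B) (h : v b = 0) :
    holOp v 0 (deltaVec b) = deltaVec b := by
  classical
  funext g
  rw [holOp_delta_apply]
  by_cases hg : g = b
  · subst hg
    rw [AddChar.sum_apply_eq_ite, if_pos h, deltaVec, if_pos rfl, mul_one,
      inv_mul_cancel₀ (Nat.cast_ne_zero.2 (Fintype.card_ne_zero (α := C)))]
  · simp [deltaVec, hg]

lemma holOp_delta_ne (v : B →+ C) (b : B) (h : v b ≠ 0) :
    holOp v 0 (deltaVec b) = 0 := by
  classical
  funext g
  rw [holOp_delta_apply]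
  by_cases hg : g = b
  · subst hg
    rw [AddChar.sum_apply_eq_ite, if_neg h]
    simp
  · simp [deltaVec, hg]

lemma shiftOp_delta (t f : B) : shiftOp t (deltaVec f) = deltaVec (f + t) := by
  funext g
  simp only [shiftOp, LinearMap.coe_mk, AddHom.coe_mk, deltaVec, sub_eq_iff_eq_add, add_comm t f]

lemma gauge_delta (u : A →+ B) (f : B) :
    gaugeOp u 1 (deltaVec f) = (Fintype.card A : ℂ)⁻¹ • ∑ a : A, deltaVec (f + u a) := by
  rw [gaugeOp, LinearMap.smul_apply, LinearMap.sum_apply]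
  congr 1
  refine Finset.sum_congr rfl fun a _ => ?_
  rw [LinearMap.smul_apply, shiftOp_delta, AddChar.one_apply, one_smul]

lemma gauge_delta_add (u : A →+ B) (f : B) (a : A) :
    gaugeOp u 1 (deltaVec (f + u a)) = gaugeOp u 1 (deltaVec f) := by
  rw [gauge_delta, gauge_delta]
  congr 1
  refine Fintype.sum_equiv (Equiv.addLeft a) _ _ fun b => ?_
  simp [add_assoc, ← map_add]

lemma gauge_idem (u : A →+ B) (f : B) :
    gaugeOp u 1 (gaugeOp u 1 (deltaVec f)) = gaugeOp u 1 (deltaVec f) := by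
  rw [gauge_delta, map_smul, map_sum]
  simp only [gauge_delta_add]
  rw [Finset.sum_const, Finset.card_univ, ← Nat.cast_smul_eq_nsmul ℂ, smul_smul,
    inv_mul_cancel₀ (Nat.cast_ne_zero.2 (Fintype.card_ne_zero (α := A))), one_smul]
  exact gauge_delta u f

/-- `Π₀ δ_f = 𝒜₀ δ_f` if `v(f) = 0`, `Π₀ δ_f = 0` otherwise; and for `f` with
`v(f) = 0` the vector `𝒜₀ δ_f` is a ground state: `Π₀ (𝒜₀ δ_f) = 𝒜₀ δ_f`. -/
theorem groundProj_on_basis (u : A →+ B) (v : B →+ C) (hvu : v.comp u = 0) (f : B) :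
    (v f = 0 → groundProj u v (deltaVec f) = gaugeOp u 1 (deltaVec f)) ∧
    (v f ≠ 0 → groundProj u v (deltaVec f) = 0) ∧
    (v f = 0 → groundProj u v (gaugeOp u 1 (deltaVec f)) = gaugeOp u 1 (deltaVec f)) := by
  refine ⟨fun h => ?_, fun h => ?_, fun h => ?_⟩
  · simp [groundProj, holOp_delta_zero v f h]
  · simp [groundProj, holOp_delta_ne v f h]
  · have key : holOp v 0 (gaugeOp u 1 (deltaVec f)) = gaugeOp u 1 (deltaVec f) := by
      rw [gauge_delta, map_smul, map_sum]
      congr 1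
      refine Finset.sum_congr rfl fun a _ => ?_
      have hva : v (u a) = 0 := by simpa using DFunLike.congr_fun hvu a
      exact holOp_delta_zero v _ (by simp [h, hva])
    simp only [groundProj, LinearMap.comp_apply, key, gauge_idem]
end
end

section
/- The vector 𝒜₀ δ_0 is nonzero and satisfies Π₀ (𝒜₀ δ_0) = 𝒜₀ δ_0; in particular the ground state subspace {ψ ∈ 𝓗 : Π₀ ψ = ψ} is nonzero. -/
open scoped BigOperators

noncomputable section

variable {A B C : Type} [AddCommGroup A] [Fintype A] [AddCommGroup B] [Fintype B]
  [DecidableEq B] [AddCommGroup C] [Fintype C]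

lemma gauge_apply (u : A →+ B) (ψ : B → ℂ) (g : B) :
    gaugeOp u 1 ψ g = (Fintype.card A : ℂ)⁻¹ * ∑ a : A, ψ (g - u a) := by
  simp [gaugeOp, shiftOp, LinearMap.sum_apply, Finset.sum_apply, smul_eq_mul]

lemma hol_apply (v : B →+ C) (ψ : B → ℂ) (g : B) :
    holOp v 0 ψ g = (Fintype.card C : ℂ)⁻¹ * ∑ r : AddChar C ℂ, r (v g) * ψ g := by
  simp [holOp, clockOp, LinearMap.sum_apply, Finset.sum_apply, smul_eq_mul]

lemma psi_eq (u : A →+ B) (g : B) :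
    gaugeOp u 1 (deltaVec (0 : B)) g
      = (Fintype.card A : ℂ)⁻¹ * ∑ a : A, (if g = u a then 1 else 0) := by
  rw [gauge_apply]
  congr 1
  refine Finset.sum_congr rfl fun a _ => ?_
  simp [deltaVec, sub_eq_zero]

/-- `𝒜₀ δ_0` is a nonzero ground state; in particular the ground state
subspace `{ψ : Π₀ ψ = ψ}` is nonzero. -/
theorem ground_state_subspace_nonzero (u : A →+ B) (v : B →+ C) (hvu : v.comp u = 0) :
    gaugeOp u 1 (deltaVec (0 : B)) ≠ 0 ∧
    groundProj u v (gaugeOp u 1 (deltaVec (0 : B))) = gaugeOp u 1 (deltaVec (0 : B)) ∧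
    ∃ ψ : B → ℂ, ψ ≠ 0 ∧ groundProj u v ψ = ψ := by
  set ψ := gaugeOp u 1 (deltaVec (0 : B)) with hψ
  have hA : (Fintype.card A : ℂ) ≠ 0 := Nat.cast_ne_zero.2 Fintype.card_ne_zero
  have hC : (Fintype.card C : ℂ) ≠ 0 := Nat.cast_ne_zero.2 Fintype.card_ne_zero
  have hne : ψ ≠ 0 := by
    intro h
    have h0 : ψ 0 = 0 := by rw [h]; rfl
    rw [hψ, psi_eq] at h0
    rcases mul_eq_zero.1 h0 with h1 | h1
    · exact hA (inv_eq_zero.1 h1)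
    · have : (∑ a : A, if (0 : B) = u a then (1 : ℂ) else 0)
          = ((Finset.univ.filter fun a : A => (0 : B) = u a).card : ℂ) := by
        simp [Finset.sum_ite_eq, Finset.sum_boole]
      rw [this] at h1
      have : (Finset.univ.filter fun a : A => (0 : B) = u a).card = 0 :=
        Nat.cast_eq_zero.1 h1
      rw [Finset.card_eq_zero] at this
      have h0mem : (0 : A) ∈ Finset.univ.filter fun a : A => (0 : B) = u a := by
        simp
      rw [this] at h0mem
      exact absurd h0mem (Finset.notMem_empty _)
  -- holOp v 0 fixes ψ
  have hhol : holOp v 0 ψ = ψ := by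
    funext g
    rw [hol_apply, hψ]
    have key : ∀ r : AddChar C ℂ,
        r (v g) * gaugeOp u 1 (deltaVec (0 : B)) g = gaugeOp u 1 (deltaVec (0 : B)) g := by
      intro r
      rw [psi_eq, mul_comm, mul_assoc]
      congr 1
      rw [Finset.sum_mul]
      refine Finset.sum_congr rfl fun a _ => ?_
      by_cases h : g = u a
      · have hv : v (u a) = 0 := by
          have := DFunLike.congr_fun hvu a
          simpa using this
        simp [h, hv]
      · simp [h]
    rw [Finset.sum_congr rfl fun r _ => key r, Finset.sum_const, Finset.card_univ,
      AddChar.card_eq, nsmul_eq_mul, ← mul_assoc, inv_mul_cancel₀ hC, one_mul]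
  -- gaugeOp u 1 fixes ψ
  have hgauge : gaugeOp u 1 ψ = ψ := by
    funext g
    rw [gauge_apply, hψ, psi_eq]
    have step : ∀ a : A, gaugeOp u 1 (deltaVec (0 : B)) (g - u a)
        = (Fintype.card A : ℂ)⁻¹ * ∑ c : A, (if g = u c then 1 else 0) := by
      intro a
      rw [psi_eq]
      congr 1
      have := Equiv.sum_comp (Equiv.addLeft a) (fun c : A => if g = u c then (1 : ℂ) else 0)
      rw [← this]
      refine Finset.sum_congr rfl fun b _ => ?_
      have : g - u a = u b ↔ g = u (a + b) := by
        rw [map_add, sub_eq_iff_eq_add, add_comm]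
      simp only [Equiv.coe_addLeft]
      exact if_congr this rfl rfl
    rw [Finset.sum_congr rfl fun a _ => step a, Finset.sum_const, Finset.card_univ,
      nsmul_eq_mul, ← mul_assoc, ← mul_assoc, inv_mul_cancel₀ hA, one_mul]
  have hfix : groundProj u v ψ = ψ := by
    rw [groundProj, LinearMap.comp_apply, hhol, hgauge]
  exact ⟨hne, hfix, ψ, hne, hfix⟩
end
end

section
/- The dimension over ℂ of the range of Π₀ (the ground state degeneracy) equals the cardinality of the quotient group ker(v) / u(A), where u(A) ⊆ ker(v) since v ∘ u = 0. In the abelian higher gauge theory setting, with A = hom(C,G)^{-1}, B = hom(C,G)^0, C = hom(C,G)^1 and u = δ^{-1}, v = δ^0, this says GSD = |H⁰(C,G)|. -/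
open scoped BigOperators

noncomputable section

variable {A B C : Type} [AddCommGroup A] [Fintype A] [AddCommGroup B] [Fintype B]
  [DecidableEq B] [AddCommGroup C] [Fintype C]

/-- the ground state degeneracy, i.e. the dimension of the range of `Π₀`,
equals `|ker v / im u| = |H⁰(C,G)|`. -/
theorem ground_state_degeneracy (u : A →+ B) (v : B →+ C) (hvu : v.comp u = 0) :
    Module.finrank ℂ ↥(LinearMap.range (groundProj u v)) =
      Nat.card (↥v.ker ⧸ (u.range.addSubgroupOf v.ker)) := by
  classical
  set Q := ↥v.ker ⧸ (u.range.addSubgroupOf v.ker) with hQ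
  haveI : Fintype Q := Fintype.ofFinite _
  have hvu' : ∀ a : A, v (u a) = 0 := fun a => DFunLike.congr_fun hvu a
  have hcardA : (Fintype.card A : ℂ) ≠ 0 := by
    exact_mod_cast Fintype.card_ne_zero
  -- pointwise formula for holOp v 0
  have hhol : ∀ (ψ : B → ℂ) (g : B),
      holOp v 0 ψ g = if v g = 0 then ψ g else 0 := by
    intro ψ g
    have : holOp v 0 ψ g
        = (Fintype.card C : ℂ)⁻¹ * ((∑ r : AddChar C ℂ, r (v g)) * ψ g) := by
      simp [holOp, clockOp, Finset.sum_apply, Finset.sum_mul]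
    rw [this, AddChar.sum_apply_eq_ite]
    by_cases h : v g = 0 <;> simp [h, mul_comm, mul_assoc,
      inv_mul_cancel₀ (show (Fintype.card C : ℂ) ≠ 0 by exact_mod_cast Fintype.card_ne_zero)]
  -- pointwise formula for gaugeOp u 1
  have hgauge : ∀ (ψ : B → ℂ) (g : B),
      gaugeOp u 1 ψ g = (Fintype.card A : ℂ)⁻¹ * ∑ a : A, ψ (g - u a) := by
    intro ψ g
    simp [gaugeOp, shiftOp, Finset.sum_apply]
  -- pointwise formula for groundProj
  have hproj : ∀ (ψ : B → ℂ) (g : B),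
      groundProj u v ψ g
        = if v g = 0 then (Fintype.card A : ℂ)⁻¹ * ∑ a : A, ψ (g - u a) else 0 := by
    intro ψ g
    have : groundProj u v ψ g = gaugeOp u 1 (holOp v 0 ψ) g := rfl
    rw [this, hgauge]
    have hterm : ∀ a : A, holOp v 0 ψ (g - u a) = if v g = 0 then ψ (g - u a) else 0 := by
      intro a
      rw [hhol]
      have : v (g - u a) = v g := by simp [hvu' a]
      rw [this]
    simp only [hterm]
    by_cases h : v g = 0 <;> simp [h]
  -- the comparison map Φ : (Q → ℂ) →ₗ (B → ℂ)
  let Phi : (Q → ℂ) →ₗ[ℂ] (B → ℂ) :=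
    { toFun := fun φ => fun g =>
        if h : v g = 0 then φ (QuotientAddGroup.mk ⟨g, h⟩) else 0
      map_add' := by intro φ₁ φ₂; funext g; by_cases h : v g = 0 <;> simp [h]
      map_smul' := by intro c φ; funext g; by_cases h : v g = 0 <;> simp [h] }
  have hPhi_inj : Function.Injective Phi := by
    rw [injective_iff_map_eq_zero]
    intro φ hφ
    funext q
    obtain ⟨b, rfl⟩ := QuotientAddGroup.mk_surjective q
    have h0 : Phi φ (b : B) = 0 := by rw [hφ]; rfl
    have h1 : v (b : B) = 0 → φ (QuotientAddGroup.mk b) = 0 := by simpa [Phi] using h0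
    exact h1 b.2
  -- classes of shifted elements agree
  have hmk : ∀ (g : B) (hg : v g = 0) (a : A),
      (QuotientAddGroup.mk ⟨g - u a, by simp [hvu' a, hg]⟩ : Q)
        = QuotientAddGroup.mk ⟨g, hg⟩ := by
    intro g hg a
    apply (QuotientAddGroup.eq).2
    refine ⟨a, ?_⟩
    simp [AddSubgroup.addSubgroupOf]
  -- range groundProj = range Phi
  have hrange : LinearMap.range (groundProj u v) = LinearMap.range Phi := by
    apply le_antisymm
    · rintro _ ⟨ψ, rfl⟩
      have wd : ∀ (b₁ b₂ : ↥v.ker),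
          (QuotientAddGroup.leftRel (u.range.addSubgroupOf v.ker)).r b₁ b₂ →
          (fun b : ↥v.ker => (Fintype.card A : ℂ)⁻¹ * ∑ a : A, ψ ((b : B) - u a)) b₁ =
          (fun b : ↥v.ker => (Fintype.card A : ℂ)⁻¹ * ∑ a : A, ψ ((b : B) - u a)) b₂ := by
        intro b₁ b₂ h
        have h' : -b₁ + b₂ ∈ u.range.addSubgroupOf v.ker :=
          (QuotientAddGroup.leftRel_apply).1 h
        obtain ⟨a₀, ha₀⟩ := h'
        have hb : (b₂ : B) = (b₁ : B) + u a₀ := by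
          have : u a₀ = -(b₁ : B) + (b₂ : B) := ha₀
          rw [this]; abel
        simp only
        congr 1
        rw [hb]
        refine (Fintype.sum_equiv (Equiv.subRight a₀)
          (fun a => ψ ((b₁ : B) + u a₀ - u a)) (fun a => ψ ((b₁ : B) - u a)) ?_).symm
        intro a
        congr 1
        simp only [Equiv.subRight_apply, map_sub]
        abel
      refine ⟨fun q => Quotient.liftOn q
        (fun b : ↥v.ker => (Fintype.card A : ℂ)⁻¹ * ∑ a : A, ψ ((b : B) - u a)) wd, ?_⟩
      funext g
      rw [hproj]
      by_cases h : v g = 0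
      · simp only [h, if_pos]
        have : Phi (fun q => Quotient.liftOn q
            (fun b : ↥v.ker => (Fintype.card A : ℂ)⁻¹ * ∑ a : A, ψ ((b : B) - u a)) wd) g
            = (Fintype.card A : ℂ)⁻¹ * ∑ a : A, ψ (g - u a) := by
          simp only [Phi, LinearMap.coe_mk, AddHom.coe_mk, h, dif_pos]
          rfl
        rw [this]
      · simp [Phi, h]
    · rintro _ ⟨φ, rfl⟩
      refine ⟨Phi φ, ?_⟩
      funext g
      rw [hproj]
      by_cases h : v g = 0
      · simp only [h, if_pos]
        have hterm : ∀ a : A, Phi φ (g - u a) = φ (QuotientAddGroup.mk ⟨g, h⟩) := by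
          intro a
          have hga : v (g - u a) = 0 := by simp [hvu' a, h]
          have : Phi φ (g - u a) = φ (QuotientAddGroup.mk ⟨g - u a, hga⟩) := by
            simp [Phi, hga]
          rw [this, hmk g h a]
        rw [Finset.sum_congr rfl (fun a _ => hterm a), Finset.sum_const]
        simp [Phi, h, Finset.card_univ, mul_comm, ← mul_assoc, inv_mul_cancel₀ hcardA]
      · simp [Phi, h]
  rw [hrange, LinearMap.finrank_range_of_inj hPhi_inj, Module.finrank_pi,
    Nat.card_eq_fintype_card]
end
end

section
/- The assignment sending a family of cohomology classes ([f_n])_n ∈ ∏_n H^n(C, H_{n−p}(G)) to the class [α_φ(f)] ∈ H^p(C,G) is a well-defined injective group homomorphism α_φ^p : ∏_n H^n(C, H_{n−p}(G)) → H^p(C,G); in particular its value does not depend on the chosen cocycle representatives f_n. -/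
noncomputable section

/-- Transport along an equality of indices, as a homomorphism of the groups in a family. -/
def castHom (F : ℤ → Type*) [∀ n, AddCommGroup (F n)] {a b : ℤ} (h : a = b) :
    F a →+ F b := by subst h; exact AddMonoidHom.id (F a)

/-- The coboundary `δ^p` on `p`-maps between two chain complexes of abelian groups:
`(δ^p f)_n = f_{n-1} ∘ ∂_n - (-1)^p ∂'_{n-p} ∘ f_n`. -/
def homDelta (C C' : ℤ → Type*) [∀ n, AddCommGroup (C n)] [∀ n, AddCommGroup (C' n)]
    (d : ∀ n : ℤ, C n →+ C (n - 1)) (d' : ∀ n : ℤ, C' n →+ C' (n - 1))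
    (p : ℤ) (f : ∀ n : ℤ, C n →+ C' (n - p)) (n : ℤ) : C n →+ C' (n - (p + 1)) :=
  (castHom C' (show n - 1 - p = n - (p + 1) by ring)).comp ((f (n - 1)).comp (d n))
    - (p.negOnePow : ℤ) •
        (castHom C' (show n - p - 1 = n - (p + 1) by ring)).comp ((d' (n - p)).comp (f n))

/-- The `n`-cycles `ker(∂_n)` of a chain complex of abelian groups. -/
def cyclesSub (G : ℤ → Type*) [∀ n, AddCommGroup (G n)]
    (dG : ∀ n : ℤ, G n →+ G (n - 1)) (n : ℤ) : AddSubgroup (G n) :=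
  (dG n).ker

/-- The `n`-boundaries `im(∂_{n+1})` of a chain complex of abelian groups. -/
def boundariesSub (G : ℤ → Type*) [∀ n, AddCommGroup (G n)]
    (dG : ∀ n : ℤ, G n →+ G (n - 1)) (n : ℤ) : AddSubgroup (G n) :=
  ((dG (n + 1)).range).map (castHom G (show n + 1 - 1 = n by ring))

/-- The homology group `H_n(G) = ker(∂_n)/im(∂_{n+1})`. -/
abbrev homologyGrp (G : ℤ → Type*) [∀ n, AddCommGroup (G n)]
    (dG : ∀ n : ℤ, G n →+ G (n - 1)) (n : ℤ) : Type _ :=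
  ↥(cyclesSub G dG n) ⧸ (boundariesSub G dG n).addSubgroupOf (cyclesSub G dG n)

/-- The canonical projection `π_n : ker(∂_n) → H_n(G)`. -/
def homologyProj (G : ℤ → Type*) [∀ n, AddCommGroup (G n)]
    (dG : ∀ n : ℤ, G n →+ G (n - 1)) (n : ℤ) :
    ↥(cyclesSub G dG n) →+ homologyGrp G dG n :=
  QuotientAddGroup.mk' ((boundariesSub G dG n).addSubgroupOf (cyclesSub G dG n))

/-- The coboundary `d_n : Hom(C_n, M) → Hom(C_{n+1}, M)`, `d_n(h) = h ∘ ∂^C_{n+1}`. -/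
def dualD (C : ℤ → Type*) [∀ n, AddCommGroup (C n)] (dC : ∀ n : ℤ, C n →+ C (n - 1))
    (M : Type*) [AddCommGroup M] (n : ℤ) : (C n →+ M) →+ (C (n + 1) →+ M) where
  toFun h := h.comp ((castHom C (show n + 1 - 1 = n by ring)).comp (dC (n + 1)))
  map_zero' := by ext x; simp
  map_add' h h' := by ext x; simp

/-- The `n`-cocycles of `C` with coefficients in `M`. -/
def cocyclesSub (C : ℤ → Type*) [∀ n, AddCommGroup (C n)] (dC : ∀ n : ℤ, C n →+ C (n - 1))
    (M : Type*) [AddCommGroup M] (n : ℤ) : AddSubgroup (C n →+ M) :=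
  (dualD C dC M n).ker

/-- The `n`-coboundaries of `C` with coefficients in `M`. -/
def coboundariesSub (C : ℤ → Type*) [∀ n, AddCommGroup (C n)]
    (dC : ∀ n : ℤ, C n →+ C (n - 1)) (M : Type*) [AddCommGroup M] (n : ℤ) :
    AddSubgroup (C n →+ M) :=
  ((dualD C dC M (n - 1)).range).map
    (castHom (fun k => C k →+ M) (show n - 1 + 1 = n by ring))

/-- The cohomology `H^n(C,M) = ker(d_n)/im(d_{n-1})` of `C` with coefficients in `M`. -/
abbrev cohomologyGrp (C : ℤ → Type*) [∀ n, AddCommGroup (C n)]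
    (dC : ∀ n : ℤ, C n →+ C (n - 1)) (M : Type*) [AddCommGroup M] (n : ℤ) : Type _ :=
  ↥(cocyclesSub C dC M n) ⧸
    (coboundariesSub C dC M n).addSubgroupOf (cocyclesSub C dC M n)

/-- The coboundary `δ^p : hom(C,G)^p → hom(C,G)^{p+1}` as a group homomorphism. -/
def bigDelta (C G : ℤ → Type*) [∀ n, AddCommGroup (C n)] [∀ n, AddCommGroup (G n)]
    (dC : ∀ n : ℤ, C n →+ C (n - 1)) (dG : ∀ n : ℤ, G n →+ G (n - 1)) (p : ℤ) :
    (∀ n : ℤ, C n →+ G (n - p)) →+ (∀ n : ℤ, C n →+ G (n - (p + 1))) where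
  toFun f := homDelta C G dC dG p f
  map_zero' := by
    funext n; ext x
    simp [homDelta]
  map_add' f g := by
    funext n; ext x
    simp [homDelta]
    abel

/-- The cohomology `H^p(C,G) = ker(δ^p)/im(δ^{p-1})` of `C` with coefficients in the chain
complex `G`. -/
abbrev homComplexCohomology (C G : ℤ → Type*) [∀ n, AddCommGroup (C n)]
    [∀ n, AddCommGroup (G n)] (dC : ∀ n : ℤ, C n →+ C (n - 1))
    (dG : ∀ n : ℤ, G n →+ G (n - 1)) (p : ℤ) : Type _ :=
  ↥((bigDelta C G dC dG p).ker) ⧸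
    (((bigDelta C G dC dG (p - 1)).range).map
        (castHom (fun q => ∀ n : ℤ, C n →+ G (n - q)) (show p - 1 + 1 = p by ring))
      ).addSubgroupOf ((bigDelta C G dC dG p).ker)

section CastLemmas

variable {F : ℤ → Type*} [∀ n, AddCommGroup (F n)]

@[simp] lemma castHom_self {a : ℤ} (h : a = a) (x : F a) : castHom F h x = x := rfl

lemma castHom_castHom {a b c : ℤ} (h1 : a = b) (h2 : b = c) (x : F a) :
    castHom F h2 (castHom F h1 x) = castHom F (h1.trans h2) x := by subst h1; subst h2; rfl

lemma castHom_d (dF : ∀ n : ℤ, F n →+ F (n - 1)) {a b : ℤ} (h : a = b) (x : F a) :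
    dF b (castHom F h x) = castHom F (by rw [h]) (dF a x) := by subst h; rfl

lemma castHom_eq_zero_iff {a b : ℤ} (h : a = b) (x : F a) :
    castHom F h x = 0 ↔ x = 0 := by subst h; exact Iff.rfl

lemma apply_castHom_index (f : ∀ n, F n) {a b : ℤ} (h : a = b) :
    castHom F h (f a) = f b := by subst h; rfl

end CastLemmas

section HomologyLemmas

variable {G : ℤ → Type*} [∀ n, AddCommGroup (G n)] (dG : ∀ n : ℤ, G n →+ G (n - 1))

lemma castHom_mem_cycles {a b : ℤ} (h : a = b) {x : G a} (hx : x ∈ cyclesSub G dG a) :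
    castHom G h x ∈ cyclesSub G dG b := by subst h; exact hx

lemma castHom_mem_boundaries {a b : ℤ} (h : a = b) {x : G a} (hx : x ∈ boundariesSub G dG a) :
    castHom G h x ∈ boundariesSub G dG b := by subst h; exact hx

lemma proj_castHom {a b : ℤ} (h : a = b) (x : G a) (hx : x ∈ cyclesSub G dG a) :
    homologyProj G dG b ⟨castHom G h x, castHom_mem_cycles dG h hx⟩
      = castHom (homologyGrp G dG) h (homologyProj G dG a ⟨x, hx⟩) := by subst h; rfl

lemma d_mem_boundaries {u v : ℤ} (h : u - 1 = v) (x : G u) :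
    castHom G h (dG u x) ∈ boundariesSub G dG v := by
  subst h
  refine ⟨dG (u - 1 + 1) (castHom G (show u = u - 1 + 1 by ring) x), ⟨_, rfl⟩, ?_⟩
  rw [castHom_d dG (show u = u - 1 + 1 by ring) x, castHom_castHom, castHom_self]

lemma d_mem_cycles {u v : ℤ} (hdG : ∀ n : ℤ, (dG (n - 1)).comp (dG n) = 0)
    (h : u - 1 = v) (x : G u) :
    castHom G h (dG u x) ∈ cyclesSub G dG v := by
  subst h
  show dG (u - 1) (dG u x) = 0
  exact DFunLike.congr_fun (hdG u) x

lemma proj_eq_zero_of_boundary {n : ℤ} (x : G n) (hx : x ∈ cyclesSub G dG n)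
    (hb : x ∈ boundariesSub G dG n) : homologyProj G dG n ⟨x, hx⟩ = 0 := by
  rw [homologyProj, QuotientAddGroup.mk'_apply, QuotientAddGroup.eq_zero_iff]
  exact AddSubgroup.mem_addSubgroupOf.2 hb

end HomologyLemmas

section FamCast

variable {C : ℤ → Type*} [∀ n, AddCommGroup (C n)]
  {G : ℤ → Type*} [∀ n, AddCommGroup (G n)]

lemma castHom_homFam_apply {M : Type*} [AddCommGroup M] {a b : ℤ} (h : a = b)
    (u : C a →+ M) (x : C b) :
    (castHom (fun k => C k →+ M) h u) x = u (castHom C h.symm x) := by subst h; rfl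

lemma castHom_piFam_apply {a b : ℤ} (h : a = b) (u : ∀ n : ℤ, C n →+ G (n - a))
    (n : ℤ) (x : C n) :
    (castHom (fun q => ∀ n : ℤ, C n →+ G (n - q)) h u) n x
      = castHom G (by rw [h]) (u n x) := by subst h; rfl

lemma castHom_homFam2_apply {A B : ℤ → Type*} [∀ n, AddCommGroup (A n)]
    [∀ n, AddCommGroup (B n)] {a b : ℤ} (h : a = b) (u : A a →+ B a) (x : A b) :
    (castHom (fun k => A k →+ B k) h u) x = castHom B h (u (castHom A h.symm x)) := by
  subst h; rfl

lemma castHom_precomp {F : ℤ → Type*} [∀ n, AddCommGroup (F n)] {s : ℤ → ℤ}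
    {a b : ℤ} (h : a = b) (x : F (s a)) :
    castHom (fun k => F (s k)) h x = castHom F (congrArg s h) x := by subst h; rfl

end FamCast

section Pointwise

variable {C : ℤ → Type*} [∀ n, AddCommGroup (C n)]
  {G : ℤ → Type*} [∀ n, AddCommGroup (G n)]
  (dC : ∀ n : ℤ, C n →+ C (n - 1)) (dG : ∀ n : ℤ, G n →+ G (n - 1))

/-- Pointwise characterization of coboundaries. -/
lemma mem_coboundaries_iff {M : Type*} [AddCommGroup M] {n : ℤ} (v : C n →+ M) :
    v ∈ coboundariesSub C dC M n ↔ ∃ u : C (n - 1) →+ M, ∀ x : C n, v x = u (dC n x) := by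
  constructor
  · rintro ⟨-, ⟨u, rfl⟩, rfl⟩
    refine ⟨u, fun x => ?_⟩
    rw [castHom_homFam_apply]
    show u (castHom C _ (dC (n - 1 + 1) (castHom C _ x))) = u (dC n x)
    rw [castHom_d dC, castHom_castHom, castHom_self]
  · rintro ⟨u, hu⟩
    refine ⟨dualD C dC M (n - 1) u, ⟨u, rfl⟩, ?_⟩
    ext x
    rw [castHom_homFam_apply]
    show u (castHom C _ (dC (n - 1 + 1) (castHom C _ x))) = v x
    rw [castHom_d dC, castHom_castHom, castHom_self, hu]

/-- Pointwise characterization of cocycles. -/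
lemma mem_cocycles_iff {M : Type*} [AddCommGroup M] {n : ℤ} (v : C n →+ M) :
    v ∈ cocyclesSub C dC M n ↔ ∀ x : C (n + 1), v (castHom C (show n + 1 - 1 = n by ring) (dC (n + 1) x)) = 0 := by
  constructor
  · intro hv x
    exact DFunLike.congr_fun (hv : dualD C dC M n v = 0) x
  · intro hv
    show dualD C dC M n v = 0
    ext x
    exact hv x

lemma cocycle_vanish {M : Type*} [AddCommGroup M] {a : ℤ} {u : C a →+ M}
    (hu : u ∈ cocyclesSub C dC M a) {b : ℤ} (hab : b - 1 = a) (x : C b) :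
    u (castHom C hab (dC b x)) = 0 := by
  subst hab
  have := ((mem_cocycles_iff dC u).1 hu) (castHom C (show b = b - 1 + 1 by ring) x)
  rwa [castHom_d dC, castHom_castHom] at this

/-- Pointwise characterization of membership in the image of `δ^{p-1}` (cast to degree `p`). -/
lemma mem_bigRange_iff {p : ℤ} (w : ∀ n : ℤ, C n →+ G (n - p)) :
    w ∈ ((bigDelta C G dC dG (p - 1)).range).map
        (castHom (fun q => ∀ n : ℤ, C n →+ G (n - q)) (show p - 1 + 1 = p by ring)) ↔
      ∃ g : ∀ n : ℤ, C n →+ G (n - (p - 1)), ∀ (n : ℤ) (x : C n),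
        w n x = castHom G (show n - 1 - (p - 1) = n - p by ring) (g (n - 1) (dC n x))
          - ((p - 1).negOnePow : ℤ) •
              castHom G (show n - (p - 1) - 1 = n - p by ring) (dG (n - (p - 1)) (g n x)) := by
  constructor
  · rintro ⟨-, ⟨g, rfl⟩, rfl⟩
    refine ⟨g, fun n x => ?_⟩
    rw [castHom_piFam_apply]
    show castHom G _ ((homDelta C G dC dG (p - 1) g n) x) = _
    rw [homDelta]
    simp only [AddMonoidHom.sub_apply, AddMonoidHom.smul_apply, AddMonoidHom.comp_apply,
      map_sub, map_zsmul, castHom_castHom]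
  · rintro ⟨g, hg⟩
    refine ⟨bigDelta C G dC dG (p - 1) g, ⟨g, rfl⟩, ?_⟩
    funext n; ext x
    rw [castHom_piFam_apply]
    show castHom G _ ((homDelta C G dC dG (p - 1) g n) x) = _
    rw [homDelta, hg n x]
    simp only [AddMonoidHom.sub_apply, AddMonoidHom.smul_apply, AddMonoidHom.comp_apply,
      map_sub, map_zsmul, castHom_castHom]

end Pointwise

section Phi

variable {C : ℤ → Type*} [∀ n, AddCommGroup (C n)]
  {G : ℤ → Type*} [∀ n, AddCommGroup (G n)]
  (dC : ∀ n : ℤ, C n →+ C (n - 1)) (dG : ∀ n : ℤ, G n →+ G (n - 1))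

lemma phi_boundary_eq_zero
    (φ : ∀ n : ℤ, homologyGrp G dG n →+ G n)
    (hφmem : ∀ (n : ℤ) (x : homologyGrp G dG n), φ n x ∈ cyclesSub G dG n)
    (hπφ : ∀ (n : ℤ) (x : homologyGrp G dG n), homologyProj G dG n ⟨φ n x, hφmem n x⟩ = x)
    {n : ℤ} {c : homologyGrp G dG n} (hb : φ n c ∈ boundariesSub G dG n) : c = 0 := by
  rw [← hπφ n c]
  exact proj_eq_zero_of_boundary dG _ (hφmem n c) hb

lemma phi_castHom (φ : ∀ n : ℤ, homologyGrp G dG n →+ G n) {a b : ℤ} (h : a = b)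
    (c : homologyGrp G dG a) :
    φ b (castHom (homologyGrp G dG) h c) = castHom G h (φ a c) := by subst h; rfl

/-- `α_φ(f)` is a `δ^p`-cocycle when the `f_n` are cocycles. -/
lemma alpha_mem_ker
    (φ : ∀ n : ℤ, homologyGrp G dG n →+ G n)
    (hφmem : ∀ (n : ℤ) (x : homologyGrp G dG n), φ n x ∈ cyclesSub G dG n)
    {p : ℤ} (f : ∀ n : ℤ, C n →+ homologyGrp G dG (n - p))
    (hf : ∀ n : ℤ, f n ∈ cocyclesSub C dC (homologyGrp G dG (n - p)) n) :
    (fun k => (φ (k - p)).comp (f k)) ∈ (bigDelta C G dC dG p).ker := by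
  rw [AddMonoidHom.mem_ker]
  show homDelta C G dC dG p (fun k => (φ (k - p)).comp (f k)) = 0
  funext n; ext x
  have h1 : f (n - 1) (dC n x) = 0 := by
    have := cocycle_vanish dC (hf (n - 1)) (show n - 1 = n - 1 from rfl) x
    simpa using this
  have h2 : dG (n - p) (φ (n - p) (f n x)) = 0 := hφmem (n - p) (f n x)
  simp [homDelta, h1, h2]

lemma dep_transport {A B : ℤ → Type*} [∀ n, AddCommGroup (A n)]
    [∀ n, AddCommGroup (B n)] (u : ∀ n : ℤ, A n →+ B n) {a b : ℤ} (h : a = b) (x : A a) :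
    castHom B h (u a x) = u b (castHom A h x) := by subst h; rfl

/-- If every `f_n` is a coboundary then `α_φ(f)` lies in the image of `δ^{p-1}`. -/
lemma alpha_coboundary_mem_range
    (φ : ∀ n : ℤ, homologyGrp G dG n →+ G n)
    (hφmem : ∀ (n : ℤ) (x : homologyGrp G dG n), φ n x ∈ cyclesSub G dG n)
    {p : ℤ} (f : ∀ n : ℤ, C n →+ homologyGrp G dG (n - p))
    (hcb : ∀ n : ℤ, f n ∈ coboundariesSub C dC (homologyGrp G dG (n - p)) n) :
    (fun k => (φ (k - p)).comp (f k)) ∈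
      ((bigDelta C G dC dG (p - 1)).range).map
        (castHom (fun q => ∀ n : ℤ, C n →+ G (n - q)) (show p - 1 + 1 = p by ring)) := by
  have hch : ∀ n : ℤ, ∃ u : C (n - 1) →+ homologyGrp G dG (n - p),
      ∀ x : C n, f n x = u (dC n x) := fun n => (mem_coboundaries_iff dC (f n)).1 (hcb n)
  choose u hu using hch
  rw [mem_bigRange_iff dC dG]
  refine ⟨fun k => (castHom G (show k + 1 - p = k - (p - 1) by ring)).comp
      ((φ (k + 1 - p)).comp ((u (k + 1)).comp (castHom C (show k = k + 1 - 1 by ring)))),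
    fun n x => ?_⟩
  have hterm2 : dG (n - (p - 1))
      (castHom G (show n + 1 - p = n - (p - 1) by ring)
        (φ (n + 1 - p) (u (n + 1) (castHom C (show n = n + 1 - 1 by ring) x)))) = 0 := by
    rw [castHom_d dG, castHom_eq_zero_iff]
    exact hφmem (n + 1 - p) _
  have hidx : (n - 1 + 1 : ℤ) = n := by ring
  have harg : castHom (fun k => C (k - 1)) hidx
      (castHom C (show n - 1 = n - 1 + 1 - 1 by ring) (dC n x)) = dC n x := by
    rw [castHom_precomp (F := C) (s := fun k => k - 1) hidx, castHom_castHom]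
    exact castHom_self _ _
  have key : φ (n - p) (f n x)
      = castHom G (show n - 1 + 1 - p = n - p by ring)
          (φ (n - 1 + 1 - p) (u (n - 1 + 1)
            (castHom C (show n - 1 = n - 1 + 1 - 1 by ring) (dC n x)))) := by
    rw [hu n x]
    have h2 := dep_transport (A := fun k => C (k - 1))
      (B := fun k => homologyGrp G dG (k - p)) u hidx
      (castHom C (show n - 1 = n - 1 + 1 - 1 by ring) (dC n x))
    rw [harg] at h2
    rw [← h2]
    rw [castHom_precomp (F := homologyGrp G dG) (s := fun k => k - p) hidx]
    rw [phi_castHom dG φ]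
  show (φ (n - p)) ((f n) x)
    = castHom G (show n - 1 - (p - 1) = n - p by ring)
        ((castHom G (show n - 1 + 1 - p = n - 1 - (p - 1) by ring))
          ((φ (n - 1 + 1 - p)) ((u (n - 1 + 1))
            ((castHom C (show n - 1 = n - 1 + 1 - 1 by ring)) ((dC n) x)))))
      - ((p - 1).negOnePow : ℤ) •
        castHom G (show n - (p - 1) - 1 = n - p by ring)
          ((dG (n - (p - 1)))
            ((castHom G (show n + 1 - p = n - (p - 1) by ring))
              ((φ (n + 1 - p)) ((u (n + 1))
                ((castHom C (show n = n + 1 - 1 by ring)) x)))))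
  rw [hterm2, map_zero, smul_zero, sub_zero, castHom_castHom, key]

end Phi

section Injectivity

variable {C : ℤ → Type*} [∀ n, AddCommGroup (C n)]
  {G : ℤ → Type*} [∀ n, AddCommGroup (G n)]
  (dC : ∀ n : ℤ, C n →+ C (n - 1)) (dG : ∀ n : ℤ, G n →+ G (n - 1))

lemma injectivity_core
    [∀ n, Module.Free ℤ (C n)] [∀ n, Module.Finite ℤ (C n)]
    (hdC : ∀ n : ℤ, (dC (n - 1)).comp (dC n) = 0)
    (hdG : ∀ n : ℤ, (dG (n - 1)).comp (dG n) = 0)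
    (φ : ∀ n : ℤ, homologyGrp G dG n →+ G n)
    (hφmem : ∀ (n : ℤ) (x : homologyGrp G dG n), φ n x ∈ cyclesSub G dG n)
    (hπφ : ∀ (n : ℤ) (x : homologyGrp G dG n), homologyProj G dG n ⟨φ n x, hφmem n x⟩ = x)
    {p : ℤ} (f : ∀ n : ℤ, C n →+ homologyGrp G dG (n - p))
    (g : ∀ n : ℤ, C n →+ G (n - (p - 1)))
    (hg : ∀ (n : ℤ) (x : C n),
      φ (n - p) (f n x) = castHom G (show n - 1 - (p - 1) = n - p by ring) (g (n - 1) (dC n x))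
        - ((p - 1).negOnePow : ℤ) •
            castHom G (show n - (p - 1) - 1 = n - p by ring) (dG (n - (p - 1)) (g n x)))
    (m : ℤ) : f m ∈ coboundariesSub C dC (homologyGrp G dG (m - p)) m := by
  classical
  set ε : ℤ := ((p - 1).negOnePow : ℤ) with hε
  have hεε : ε * ε = 1 := by
    rw [hε, ← Units.val_mul, Int.units_mul_self]; rfl
  -- Step A: `z x := cast (g (m-1) (∂ x))` is a cycle and `f m x = π (z x)`.
  have hzc : ∀ x : C m,
      castHom G (show m - 1 - (p - 1) = m - p by ring) (g (m - 1) (dC m x))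
        ∈ cyclesSub G dG (m - p) := by
    intro x
    have hw : castHom G (show m - (p - 1) - 1 = m - p by ring) (dG (m - (p - 1)) (g m x))
        ∈ cyclesSub G dG (m - p) := d_mem_cycles dG hdG _ _
    have heq : castHom G (show m - 1 - (p - 1) = m - p by ring) (g (m - 1) (dC m x))
        = φ (m - p) (f m x)
          + ε • castHom G (show m - (p - 1) - 1 = m - p by ring) (dG (m - (p - 1)) (g m x)) := by
      rw [hg m x]; abel
    rw [heq]
    exact AddSubgroup.add_mem _ (hφmem _ _) (AddSubgroup.zsmul_mem _ hw _)
  have hfz : ∀ x : C m, f m x = homologyProj G dG (m - p)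
      ⟨castHom G (show m - 1 - (p - 1) = m - p by ring) (g (m - 1) (dC m x)), hzc x⟩ := by
    intro x
    have hw : castHom G (show m - (p - 1) - 1 = m - p by ring) (dG (m - (p - 1)) (g m x))
        ∈ cyclesSub G dG (m - p) := d_mem_cycles dG hdG _ _
    have hwb : castHom G (show m - (p - 1) - 1 = m - p by ring) (dG (m - (p - 1)) (g m x))
        ∈ boundariesSub G dG (m - p) := d_mem_boundaries dG _ _
    have hsub : (⟨castHom G (show m - 1 - (p - 1) = m - p by ring) (g (m - 1) (dC m x)), hzc x⟩ :
        cyclesSub G dG (m - p))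
        = ⟨φ (m - p) (f m x), hφmem _ _⟩
          + ε • ⟨castHom G (show m - (p - 1) - 1 = m - p by ring)
              (dG (m - (p - 1)) (g m x)), hw⟩ := by
      ext
      show _ = φ (m - p) (f m x) + ε • castHom G _ (dG (m - (p - 1)) (g m x))
      rw [hg m x]; abel
    rw [hsub, map_add, map_zsmul, hπφ, proj_eq_zero_of_boundary dG _ hw hwb, smul_zero, add_zero]
  -- Step B: Smith normal form for the image of `∂_m` inside `C (m-1)`.
  let N : Submodule ℤ (C (m - 1)) := LinearMap.range ((dC m).toIntLinearMap)
  obtain ⟨r, snf⟩ := N.smithNormalForm (Module.Free.chooseBasis ℤ (C (m - 1)))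
  -- each basis vector `bM (f j)` is a cycle of `C`, and `g (m-1)` of it is a cycle of `G`
  have hbNC : ∀ j : Fin r, dC (m - 1) ((snf.bN j : C (m - 1))) = 0 := by
    intro j
    obtain ⟨x, hx⟩ := (snf.bN j).2
    rw [← hx]
    exact DFunLike.congr_fun (hdC m) x
  have haj : ∀ j : Fin r, snf.a j ≠ 0 := by
    intro j hj
    have := snf.snf j
    rw [hj, zero_smul] at this
    exact (snf.bN.ne_zero j) (Subtype.ext this)
  have hecyc : ∀ j : Fin r, dC (m - 1) (snf.bM (snf.f j)) = 0 := by
    intro j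
    have h1 := hbNC j
    rw [snf.snf j, map_zsmul] at h1
    rcases smul_eq_zero.1 h1 with h | h
    · exact absurd h (haj j)
    · exact h
  have hYcyc : ∀ j : Fin r,
      castHom G (show m - 1 - (p - 1) = m - p by ring) (g (m - 1) (snf.bM (snf.f j)))
        ∈ cyclesSub G dG (m - p) := by
    intro j
    apply castHom_mem_cycles dG
    have h1 := hg (m - 1) (snf.bM (snf.f j))
    rw [hecyc j, map_zero, map_zero, zero_sub] at h1
    have h2 : φ (m - 1 - p) ((-ε) • f (m - 1) (snf.bM (snf.f j)))
        = castHom G (show m - 1 - (p - 1) - 1 = m - 1 - p by ring)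
            (dG (m - 1 - (p - 1)) (g (m - 1) (snf.bM (snf.f j)))) := by
      rw [map_zsmul, h1, smul_neg, smul_smul, neg_mul, hεε, neg_smul, neg_neg, one_smul]
    have h3 : φ (m - 1 - p) ((-ε) • f (m - 1) (snf.bM (snf.f j)))
        ∈ boundariesSub G dG (m - 1 - p) := by
      rw [h2]; exact d_mem_boundaries dG _ _
    have h4 := phi_boundary_eq_zero dG φ hφmem hπφ h3
    rw [h4, map_zero] at h2
    exact (castHom_eq_zero_iff _ _).1 h2.symm
  -- the extension of `π ∘ g_{m-1}` along the Smith basis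
  let v : Module.Free.ChooseBasisIndex ℤ (C (m - 1)) → homologyGrp G dG (m - p) := fun i =>
    if hi : ∃ j : Fin r, snf.f j = i then
      homologyProj G dG (m - p)
        ⟨castHom G (show m - 1 - (p - 1) = m - p by ring) (g (m - 1) (snf.bM i)),
          by obtain ⟨j, rfl⟩ := hi; exact hYcyc j⟩
    else 0
  let h0 : C (m - 1) →ₗ[ℤ] homologyGrp G dG (m - p) := snf.bM.constr ℤ v
  have memN : ∀ w : ↥N, castHom G (show m - 1 - (p - 1) = m - p by ring)
      (g (m - 1) ((w : C (m - 1)))) ∈ cyclesSub G dG (m - p) := by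
    intro w
    obtain ⟨x, hx⟩ := w.2
    rw [← show (dC m) x = (w : C (m - 1)) from hx]
    exact hzc x
  let L1hom : ↥N →+ homologyGrp G dG (m - p) :=
    (homologyProj G dG (m - p)).comp
      (AddMonoidHom.codRestrict
        ((castHom G (show m - 1 - (p - 1) = m - p by ring)).comp
          ((g (m - 1)).comp (N.subtype.toAddMonoidHom)))
        (cyclesSub G dG (m - p)) memN)
  have hL : L1hom.toIntLinearMap = h0 ∘ₗ N.subtype := by
    apply snf.bN.ext
    intro j
    have hsp : (snf.bN j : C (m - 1)) = snf.a j • snf.bM (snf.f j) := snf.snf j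
    have lhs : L1hom (snf.bN j) = snf.a j •
        homologyProj G dG (m - p)
          ⟨castHom G (show m - 1 - (p - 1) = m - p by ring)
            (g (m - 1) (snf.bM (snf.f j))), hYcyc j⟩ := by
      show homologyProj G dG (m - p) _ = _
      rw [← map_zsmul]
      congr 1
      ext
      show castHom G (show m - 1 - (p - 1) = m - p by ring)
          (g (m - 1) ((snf.bN j : C (m - 1)))) = _
      rw [hsp, map_zsmul, map_zsmul]
      rfl
    have rhs : (h0 ∘ₗ N.subtype) (snf.bN j) = snf.a j •
        homologyProj G dG (m - p)
          ⟨castHom G (show m - 1 - (p - 1) = m - p by ring)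
            (g (m - 1) (snf.bM (snf.f j))), hYcyc j⟩ := by
      show h0 ((snf.bN j : C (m - 1))) = _
      rw [hsp, map_smul]
      congr 1
      show (snf.bM.constr ℤ v) (snf.bM (snf.f j)) = _
      rw [Module.Basis.constr_basis]
      show v (snf.f j) = _
      rw [show v (snf.f j) = _ from dif_pos ⟨j, rfl⟩]
    show L1hom.toIntLinearMap (snf.bN j) = (h0 ∘ₗ N.subtype) (snf.bN j)
    rw [rhs, ← lhs]
    rfl
  rw [mem_coboundaries_iff dC]
  refine ⟨h0.toAddMonoidHom, fun x => ?_⟩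
  rw [hfz x]
  have hmem : dC m x ∈ N := ⟨x, rfl⟩
  exact DFunLike.congr_fun hL ⟨dC m x, hmem⟩

end Injectivity


set_option maxHeartbeats 800000 in
/-- the assignment `([f_n])_n ↦ [α_φ(f)]` is a well-defined injective group
homomorphism `α_φ^p : ∏_n H^n(C, H_{n-p}(G)) → H^p(C,G)`; in particular its value does not
depend on the chosen cocycle representatives `f_n`. -/
theorem alpha_well_defined_injective (C : ℤ → Type*) [∀ n, AddCommGroup (C n)]
    [∀ n, Module.Free ℤ (C n)] [∀ n, Module.Finite ℤ (C n)]
    (dC : ∀ n : ℤ, C n →+ C (n - 1))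
    (hdC : ∀ n : ℤ, (dC (n - 1)).comp (dC n) = 0)
    (hCfin : {n : ℤ | Nontrivial (C n)}.Finite)
    (G : ℤ → Type*) [∀ n, AddCommGroup (G n)] [∀ n, Finite (G n)]
    (dG : ∀ n : ℤ, G n →+ G (n - 1))
    (hdG : ∀ n : ℤ, (dG (n - 1)).comp (dG n) = 0)
    (hGfin : {n : ℤ | Nontrivial (G n)}.Finite)
    (φ : ∀ n : ℤ, homologyGrp G dG n →+ G n)
    (hφmem : ∀ (n : ℤ) (x : homologyGrp G dG n), φ n x ∈ cyclesSub G dG n)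
    (hπφ : ∀ (n : ℤ) (x : homologyGrp G dG n), homologyProj G dG n ⟨φ n x, hφmem n x⟩ = x)
    (p : ℤ) :
    ∃ α : (∀ n : ℤ, cohomologyGrp C dC (homologyGrp G dG (n - p)) n) →+
        homComplexCohomology C G dC dG p,
      Function.Injective α ∧
      ∀ (f : ∀ n : ℤ, C n →+ homologyGrp G dG (n - p))
        (hf : ∀ n : ℤ, f n ∈ cocyclesSub C dC (homologyGrp G dG (n - p)) n)
        (hker : (fun k => (φ (k - p)).comp (f k)) ∈ (bigDelta C G dC dG p).ker),
        α (fun n => QuotientAddGroup.mk ⟨f n, hf n⟩) =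
          QuotientAddGroup.mk ⟨fun k => (φ (k - p)).comp (f k), hker⟩ := by
  classical
  -- the map on families of cocycles
  let F : (∀ n : ℤ, ↥(cocyclesSub C dC (homologyGrp G dG (n - p)) n)) →
      homComplexCohomology C G dC dG p := fun s =>
    QuotientAddGroup.mk ⟨fun k => (φ (k - p)).comp ((s k).1),
      alpha_mem_ker dC dG φ hφmem (fun k => ((s k).1)) (fun n => (s n).2)⟩
  -- well-definedness on cohomology classes
  have WD : ∀ s t : (∀ n : ℤ, ↥(cocyclesSub C dC (homologyGrp G dG (n - p)) n)),
      (∀ n : ℤ, (QuotientAddGroup.mk (s n) :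
          cohomologyGrp C dC (homologyGrp G dG (n - p)) n) = QuotientAddGroup.mk (t n)) →
      F s = F t := by
    intro s t hst
    have hcb : ∀ n : ℤ, ((t n : C n →+ homologyGrp G dG (n - p)) - (s n : C n →+ _))
        ∈ coboundariesSub C dC (homologyGrp G dG (n - p)) n := by
      intro n
      have h1 := (QuotientAddGroup.eq).1 (hst n)
      have h2 := AddSubgroup.mem_addSubgroupOf.1 h1
      simpa [neg_add_eq_sub] using h2
    have hmem := alpha_coboundary_mem_range dC dG φ hφmem
      (fun n => (t n : C n →+ homologyGrp G dG (n - p)) - (s n : C n →+ _)) hcb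
    show QuotientAddGroup.mk _ = QuotientAddGroup.mk _
    rw [QuotientAddGroup.eq]
    rw [AddSubgroup.mem_addSubgroupOf]
    convert hmem using 1
    funext k
    ext x
    simp [map_sub, neg_add_eq_sub]
  have hout : ∀ (a : ∀ n : ℤ, cohomologyGrp C dC (homologyGrp G dG (n - p)) n) (n : ℤ),
      (QuotientAddGroup.mk ((a n).out) :
        cohomologyGrp C dC (homologyGrp G dG (n - p)) n) = a n :=
    fun a n => Quotient.out_eq' _
  let αf : (∀ n : ℤ, cohomologyGrp C dC (homologyGrp G dG (n - p)) n) →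
      homComplexCohomology C G dC dG p := fun a => F (fun n => (a n).out)
  have hF : ∀ (a : ∀ n : ℤ, cohomologyGrp C dC (homologyGrp G dG (n - p)) n)
      (s : ∀ n : ℤ, ↥(cocyclesSub C dC (homologyGrp G dG (n - p)) n)),
      (∀ n : ℤ, (QuotientAddGroup.mk (s n) :
          cohomologyGrp C dC (homologyGrp G dG (n - p)) n) = a n) → αf a = F s :=
    fun a s hs => WD _ s (fun n => (hout a n).trans (hs n).symm)
  have Fadd : ∀ s t, F (s + t) = F s + F t := by
    intro s t
    show QuotientAddGroup.mk _ = QuotientAddGroup.mk _ + QuotientAddGroup.mk _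
    rw [← QuotientAddGroup.mk_add]
    congr 1
    ext k x
    simp
  have hadd : ∀ a b, αf (a + b) = αf a + αf b := by
    intro a b
    have h1 : αf (a + b) = F ((fun n => (a n).out) + fun n => (b n).out) := by
      apply hF
      intro n
      show (QuotientAddGroup.mk ((a n).out + (b n).out) : _) = a n + b n
      rw [QuotientAddGroup.mk_add, hout, hout]
    rw [h1, Fadd]
  refine ⟨AddMonoidHom.mk' αf hadd, ?_, ?_⟩
  · rw [injective_iff_map_eq_zero]
    intro a ha
    have h0 : F (fun n => (a n).out) = 0 := ha
    rw [show (0 : homComplexCohomology C G dC dG p) = QuotientAddGroup.mk 0 from rfl] at h0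
    have h1 := (QuotientAddGroup.eq).1 h0.symm
    rw [neg_zero, zero_add, AddSubgroup.mem_addSubgroupOf] at h1
    have h2 : (fun k => (φ (k - p)).comp (((a k).out : C k →+ homologyGrp G dG (k - p)))) ∈
        ((bigDelta C G dC dG (p - 1)).range).map
          (castHom (fun q => ∀ n : ℤ, C n →+ G (n - q)) (show p - 1 + 1 = p by ring)) := h1
    obtain ⟨g, hg⟩ := (mem_bigRange_iff dC dG _).1 h2
    have hcob := injectivity_core dC dG hdC hdG φ hφmem hπφ
      (fun n => ((a n).out : C n →+ homologyGrp G dG (n - p))) g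
      (fun n x => hg n x)
    funext n
    refine (hout a n).symm.trans ?_
    show (QuotientAddGroup.mk ((a n).out) : cohomologyGrp C dC (homologyGrp G dG (n - p)) n)
      = QuotientAddGroup.mk 0
    rw [QuotientAddGroup.eq, add_zero, AddSubgroup.mem_addSubgroupOf]
    exact AddSubgroup.neg_mem _ (hcob n)
  · intro f hf hker
    have h1 : αf (fun n => QuotientAddGroup.mk ⟨f n, hf n⟩) = F (fun n => ⟨f n, hf n⟩) :=
      hF _ _ (fun n => rfl)
    exact h1
end
end
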